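/- Let α : [0,e] → [0,f] be a lattice isomorphism between lower sections of a complemented modular lattice and let g = e ∧ f. Then α⁻¹(g) ∧ α(g) ≤ g, and equality α⁻¹(g) ∧ α(g) = g holds if and only if α(g) = g. -/

import Mathlib

/-- For a lattice isomorphism `α : [0,e] → [0,f]` between lower sections
of a complemented modular lattice and `g = e ⊓ f`, one has `α⁻¹(g) ⊓ α(g) ≤ g`, with
equality if and only if `α(g) = g`. -/
theorem stmt9 {L : Type*} [Lattice L] [BoundedOrder L] [IsModularLattice L]
    [ComplementedLattice L] (e f : L)
    (α : Set.Icc (⊥ : L) e ≃o Set.Icc (⊥ : L) f) :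
    (↑(α.symm ⟨e ⊓ f, bot_le, inf_le_right⟩) : L) ⊓ ↑(α ⟨e ⊓ f, bot_le, inf_le_left⟩)
      ≤ e ⊓ f ∧
    ((↑(α.symm ⟨e ⊓ f, bot_le, inf_le_right⟩) : L) ⊓ ↑(α ⟨e ⊓ f, bot_le, inf_le_left⟩)
      = e ⊓ f ↔ (↑(α ⟨e ⊓ f, bot_le, inf_le_left⟩) : L) = e ⊓ f) := by
  set g₁ : Set.Icc (⊥ : L) e := ⟨e ⊓ f, bot_le, inf_le_left⟩ with hg₁
  set g₂ : Set.Icc (⊥ : L) f := ⟨e ⊓ f, bot_le, inf_le_right⟩ with hg₂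
  have h1 : (↑(α.symm g₂) : L) ≤ e := (α.symm g₂).2.2
  have h2 : (↑(α g₁) : L) ≤ f := (α g₁).2.2
  have hle : (↑(α.symm g₂) : L) ⊓ ↑(α g₁) ≤ e ⊓ f :=
    inf_le_inf h1 h2
  refine ⟨hle, ?_, ?_⟩
  · intro h
    have hga : e ⊓ f ≤ (↑(α g₁) : L) := h ▸ inf_le_right
    have hgs : e ⊓ f ≤ (↑(α.symm g₂) : L) := h ▸ inf_le_left
    -- from hgs: g₁ ≤ α.symm g₂ in Icc ⊥ e, so α g₁ ≤ g₂
    have : α g₁ ≤ g₂ := by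
      have : g₁ ≤ α.symm g₂ := hgs
      simpa using α.le_iff_le.mpr this
    exact le_antisymm this hga
  · intro h
    have hsym : α.symm g₂ = g₁ := by
      apply α.injective
      simp [Subtype.ext_iff, h]
      exact rfl
    rw [hsym, h]
    simp
    exact le_rfl
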